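/- Let U1, U2, U3, U4 be pairwise transverse n-dimensional subspaces of a real vector space V of dimension 2n. Let T = Refl(U1,U2) ∘ Refl(U3,U4) ∈ GL(V) and let C = [U1,U2;U3,U4] ∈ End(U1). Then for every real number λ ≠ 0, det(λ·id_V − T) = (4λ)^n · det(((λ+1)²/(4λ))·id_{U1} − C). -/

import Mathlib

open Module Submodule

variable {V : Type*} [AddCommGroup V] [Module ℝ V]

/-- The projection onto `U` with kernel `W`, as an endomorphism of `V`. -/
noncomputable def projTo (U W : Submodule ℝ V) (h : IsCompl U W) : V →ₗ[ℝ] V :=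
  U.subtype ∘ₗ U.linearProjOfIsCompl W h

/-- The reflection in the pair `(U, W)`: `π_U^W - π_W^U`. -/
noncomputable def reflPair (U W : Submodule ℝ V) (h : IsCompl U W) : V →ₗ[ℝ] V :=
  projTo U W h - projTo W U h.symm

/-- The generalized cross-ratio `[U1,U2;U3,U4]`: the restriction of
`π_{U1}^{U2} ∘ π_{U3}^{U4}` to `U1`, as an endomorphism of `U1`. -/
noncomputable def crossRatio (U1 U2 U3 U4 : Submodule ℝ V)
    (h12 : IsCompl U1 U2) (h34 : IsCompl U3 U4) : U1 →ₗ[ℝ] U1 :=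
  (U1.linearProjOfIsCompl U2 h12) ∘ₗ (projTo U3 U4 h34) ∘ₗ U1.subtype

lemma projTo_add_aux (U W : Submodule ℝ V) (h : IsCompl U W) :
    projTo U W h + projTo W U h.symm = LinearMap.id := by
  ext v
  exact Submodule.projection_add_projection_eq_self h v

lemma reflPair_eq_aux (U W : Submodule ℝ V) (h : IsCompl U W) :
    reflPair U W h = (2:ℝ) • projTo U W h - LinearMap.id := by
  rw [← projTo_add_aux U W h, reflPair, two_smul]; abel

lemma projTo_idem_aux (U W : Submodule ℝ V) (h : IsCompl U W) :
    projTo U W h ∘ₗ projTo U W h = projTo U W h := by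
  ext v
  simp [projTo, Submodule.linearProjOfIsCompl, Submodule.projectionOnto_apply_left]

/-- Composition of affine combinations of an idempotent endomorphism. -/
lemma comp_affine_aux {Q : V →ₗ[ℝ] V} (hQ : Q ∘ₗ Q = Q) (a b c d : ℝ) :
    (a • LinearMap.id + b • Q) ∘ₗ (c • LinearMap.id + d • Q)
      = (a*c) • LinearMap.id + (a*d + b*c + b*d) • Q := by
  ext v
  have h : Q (Q v) = Q v := LinearMap.congr_fun hQ v
  simp only [LinearMap.comp_apply, LinearMap.add_apply, LinearMap.smul_apply,
    LinearMap.id_apply, map_add, map_smul, h]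
  module

/-- Sylvester-type determinant identity for linear maps. -/
lemma sylvester_det_aux {V W : Type*} [AddCommGroup V] [Module ℝ V] [FiniteDimensional ℝ V]
    [AddCommGroup W] [Module ℝ W] [FiniteDimensional ℝ W]
    (f : W →ₗ[ℝ] V) (g : V →ₗ[ℝ] W) :
    LinearMap.det (LinearMap.id + f ∘ₗ g) = LinearMap.det (LinearMap.id + g ∘ₗ f) := by
  classical
  let b := finBasis ℝ V
  let c := finBasis ℝ W
  rw [← LinearMap.det_toMatrix b, ← LinearMap.det_toMatrix c]
  rw [map_add, map_add, LinearMap.toMatrix_id, LinearMap.toMatrix_id,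
    LinearMap.toMatrix_comp b c b, LinearMap.toMatrix_comp c b c,
    Matrix.det_one_add_mul_comm]

lemma det_affine_proj_aux [FiniteDimensional ℝ V] {n : ℕ} (hV : finrank ℝ V = 2 * n)
    (U W : Submodule ℝ V) (h : IsCompl U W) (hU : finrank ℝ U = n)
    (α β : ℝ) (hα : α ≠ 0) :
    LinearMap.det (α • (LinearMap.id : V →ₗ[ℝ] V) + β • projTo U W h)
      = α ^ n * (α + β) ^ n := by
  have e1 : α • (LinearMap.id : V →ₗ[ℝ] V) + β • projTo U W h
      = α • (LinearMap.id + U.subtype ∘ₗ ((β/α) • U.linearProjOfIsCompl W h)) := by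
    rw [smul_add, LinearMap.comp_smul, smul_smul, mul_div_cancel₀ _ hα]; rfl
  rw [e1, LinearMap.det_smul, hV, sylvester_det_aux]
  have e2 : ((β/α) • U.linearProjOfIsCompl W h) ∘ₗ U.subtype
      = (1 + β/α) • (LinearMap.id : U →ₗ[ℝ] U) - LinearMap.id := by
    rw [LinearMap.smul_comp, Submodule.linearProjOfIsCompl, Submodule.projectionOnto_comp_subtype]
    module
  rw [e2]
  have e3 : (LinearMap.id : U →ₗ[ℝ] U) + ((1 + β/α) • LinearMap.id - LinearMap.id)
      = (1 + β/α) • (LinearMap.id : U →ₗ[ℝ] U) := by module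
  rw [e3, LinearMap.det_smul, LinearMap.det_id, mul_one, hU]
  rw [show (1 + β/α) = (α+β)/α by rw [add_div, div_self hα], div_pow, pow_mul', sq, mul_assoc,
    mul_div_cancel₀ _ (pow_ne_zero n hα)]

/-- The key identity for generic `lam` (different from `0, 1, -1`). -/
lemma key_generic_aux {V : Type*} [AddCommGroup V] [Module ℝ V] [FiniteDimensional ℝ V]
    (n : ℕ) (hV : finrank ℝ V = 2 * n)
    (U1 U2 U3 U4 : Submodule ℝ V)
    (hd1 : finrank ℝ U1 = n) (hd3 : finrank ℝ U3 = n)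
    (h12 : IsCompl U1 U2) (h34 : IsCompl U3 U4)
    (lam : ℝ) (hl0 : lam ≠ 0) (hl1 : lam - 1 ≠ 0) (hl2 : lam + 1 ≠ 0) :
    LinearMap.det (lam • (LinearMap.id : V →ₗ[ℝ] V)
        - reflPair U1 U2 h12 ∘ₗ reflPair U3 U4 h34)
      = (4 * lam) ^ n *
        LinearMap.det (((lam + 1) ^ 2 / (4 * lam)) • (LinearMap.id : U1 →ₗ[ℝ] U1)
          - crossRatio U1 U2 U3 U4 h12 h34) := by
  set P := projTo U1 U2 h12 with hP
  set Q := projTo U3 U4 h34 with hQdef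
  set R1 := reflPair U1 U2 h12 with hR1
  set R2 := reflPair U3 U4 h34 with hR2
  set Ccr := crossRatio U1 U2 U3 U4 h12 h34 with hCcr
  have hQQ : Q ∘ₗ Q = Q := projTo_idem_aux U3 U4 h34
  have hR2R2 : R2 ∘ₗ R2 = LinearMap.id := by
    have h1 : R2 = (-1:ℝ) • LinearMap.id + (2:ℝ) • Q := by
      rw [hR2, reflPair_eq_aux]; module
    rw [h1, comp_affine_aux hQQ]
    norm_num
  have step2 : lam • (LinearMap.id : V →ₗ[ℝ] V) - R1 ∘ₗ R2
      = (lam • R2 - R1) ∘ₗ R2 := by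
    rw [LinearMap.sub_comp, LinearMap.smul_comp, hR2R2]
  set D : V →ₗ[ℝ] V := (lam - 1) • LinearMap.id + (-(2*lam)) • Q with hD
  set E : V →ₗ[ℝ] V :=
    (1/(lam-1)) • LinearMap.id + (-(2*lam/((lam-1)*(lam+1)))) • Q with hE
  have hDE : D ∘ₗ E = LinearMap.id := by
    rw [hD, hE, comp_affine_aux hQQ]
    have c1 : (lam - 1) * (1/(lam-1)) = 1 := by field_simp
    have c2 : (lam - 1) * (-(2*lam/((lam-1)*(lam+1)))) + (-(2*lam)) * (1/(lam-1))
        + (-(2*lam)) * (-(2*lam/((lam-1)*(lam+1)))) = 0 := by field_simp; ring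
    rw [c1, c2, one_smul, zero_smul, add_zero]
  have step4 : lam • R2 - R1 = (-1:ℝ) • (D + (2:ℝ) • P) := by
    rw [hR2, hR1, reflPair_eq_aux, reflPair_eq_aux, hD, ← hP, ← hQdef]
    module
  have step6 : D + (2:ℝ) • P = D ∘ₗ (LinearMap.id + (2:ℝ) • (E ∘ₗ P)) := by
    rw [LinearMap.comp_add, LinearMap.comp_id, LinearMap.comp_smul,
      ← LinearMap.comp_assoc, hDE, LinearMap.id_comp]
  have step7 : LinearMap.det (LinearMap.id + (2:ℝ) • (E ∘ₗ P))
      = LinearMap.det ((LinearMap.id : U1 →ₗ[ℝ] U1)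
          + (U1.linearProjOfIsCompl U2 h12) ∘ₗ ((2:ℝ) • (E ∘ₗ U1.subtype))) := by
    have hsplit : (2:ℝ) • (E ∘ₗ P)
        = ((2:ℝ) • (E ∘ₗ U1.subtype)) ∘ₗ (U1.linearProjOfIsCompl U2 h12) := by
      rw [LinearMap.smul_comp, LinearMap.comp_assoc]
      rfl
    rw [hsplit, sylvester_det_aux]
  have step8 : (LinearMap.id : U1 →ₗ[ℝ] U1)
      + (U1.linearProjOfIsCompl U2 h12) ∘ₗ ((2:ℝ) • (E ∘ₗ U1.subtype))
      = (4*lam/((lam-1)*(lam+1))) •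
          (((lam + 1) ^ 2 / (4 * lam)) • (LinearMap.id : U1 →ₗ[ℝ] U1) - Ccr) := by
    have expand : (U1.linearProjOfIsCompl U2 h12) ∘ₗ (E ∘ₗ U1.subtype)
        = (1/(lam-1)) • (LinearMap.id : U1 →ₗ[ℝ] U1)
          + (-(2*lam/((lam-1)*(lam+1)))) • Ccr := by
      rw [hE, LinearMap.add_comp, LinearMap.comp_add, LinearMap.smul_comp,
        LinearMap.comp_smul, LinearMap.smul_comp, LinearMap.comp_smul,
        LinearMap.id_comp, Submodule.linearProjOfIsCompl, Submodule.projectionOnto_comp_subtype]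
      rw [hCcr]
      rfl
    rw [LinearMap.comp_smul, expand]
    match_scalars <;> field_simp <;> ring
  have detR2 : LinearMap.det R2 = (-1:ℝ)^n := by
    have h1 : R2 = (-1:ℝ) • LinearMap.id + (2:ℝ) • Q := by
      rw [hR2, reflPair_eq_aux]; module
    rw [h1, hQdef, det_affine_proj_aux hV U3 U4 h34 hd3 (-1) 2 (by norm_num)]
    norm_num
  have detD : LinearMap.det D = (lam-1)^n * (-(lam+1))^n := by
    rw [hD, hQdef, det_affine_proj_aux hV U3 U4 h34 hd3 (lam-1) (-(2*lam)) hl1]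
    ring_nf
  rw [step2, LinearMap.det_comp, step4, LinearMap.det_smul, hV, step6,
    LinearMap.det_comp, step7, step8, LinearMap.det_smul, hd1, detR2, detD]
  generalize LinearMap.det
    (((lam + 1) ^ 2 / (4 * lam)) • (LinearMap.id : U1 →ₗ[ℝ] U1) - Ccr) = X
  have hpow : (-1:ℝ) ^ (2*n) = 1 := by
    rw [pow_mul]; norm_num
  rw [hpow, one_mul]
  have hcomb : (lam-1)^n * (-(lam+1))^n * (4*lam/((lam-1)*(lam+1)))^n * (-1:ℝ)^n
      = (4*lam)^n := by
    rw [← mul_pow, ← mul_pow, ← mul_pow]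
    congr 1
    field_simp
  linear_combination X * hcomb

open Polynomial in
lemma eval_det_smul_one_sub_aux {k : Type*} [Field k] {m : Type*} [Fintype m] [DecidableEq m]
    (M : Matrix m m k) (μ : k) :
    (((X : k[X]) • (1 : Matrix m m k[X]) - M.map C).det).eval μ
      = (μ • (1 : Matrix m m k) - M).det := by
  have h := RingHom.map_det (evalRingHom μ) ((X : k[X]) • (1 : Matrix m m k[X]) - M.map C)
  simp only [coe_evalRingHom] at h
  rw [h]
  congr 1
  ext i j
  by_cases hij : i = j <;>
    simp [Matrix.map_apply, Matrix.sub_apply, Matrix.smul_apply, Matrix.one_apply, hij,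
      smul_eq_mul]

open Polynomial in
lemma eval_det_q_aux {k : Type*} [Field k] {m : Type*} [Fintype m] [DecidableEq m]
    (N : Matrix m m k) (μ : k) :
    (((((X : k[X]) + 1) ^ 2) • (1 : Matrix m m k[X])
        - ((4 : k[X]) * X) • N.map C).det).eval μ
      = (((μ + 1) ^ 2) • (1 : Matrix m m k) - (4 * μ) • N).det := by
  have h := RingHom.map_det (evalRingHom μ)
    ((((X : k[X]) + 1) ^ 2) • (1 : Matrix m m k[X]) - ((4 : k[X]) * X) • N.map C)
  simp only [coe_evalRingHom] at h
  rw [h]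
  congr 1
  ext i j
  by_cases hij : i = j <;>
    simp [Matrix.map_apply, Matrix.sub_apply, Matrix.smul_apply, Matrix.one_apply, hij,
      smul_eq_mul]

open Polynomial in
set_option maxHeartbeats 1000000 in
set_option synthInstance.maxHeartbeats 200000 in
theorem stmt5 {V : Type*} [AddCommGroup V] [Module ℝ V] [FiniteDimensional ℝ V]
    (n : ℕ) (hV : finrank ℝ V = 2 * n)
    (U1 U2 U3 U4 : Submodule ℝ V)
    (hd1 : finrank ℝ U1 = n) (hd2 : finrank ℝ U2 = n)
    (hd3 : finrank ℝ U3 = n) (hd4 : finrank ℝ U4 = n)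
    (h12 : IsCompl U1 U2) (h13 : IsCompl U1 U3) (h14 : IsCompl U1 U4)
    (h23 : IsCompl U2 U3) (h24 : IsCompl U2 U4) (h34 : IsCompl U3 U4) :
    ∀ lam : ℝ, lam ≠ 0 →
      LinearMap.det (lam • (LinearMap.id : V →ₗ[ℝ] V)
          - reflPair U1 U2 h12 ∘ₗ reflPair U3 U4 h34)
        = (4 * lam) ^ n *
          LinearMap.det (((lam + 1) ^ 2 / (4 * lam)) • (LinearMap.id : U1 →ₗ[ℝ] U1)
            - crossRatio U1 U2 U3 U4 h12 h34) := by
  classical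
  intro lam hlam
  set T := reflPair U1 U2 h12 ∘ₗ reflPair U3 U4 h34 with hT
  set Ccr := crossRatio U1 U2 U3 U4 h12 h34 with hCcr
  -- reformulation of the right-hand side valid for any nonzero μ
  have rhs_smul : ∀ μ : ℝ, μ ≠ 0 →
      (4 * μ) ^ n * LinearMap.det
          (((μ + 1) ^ 2 / (4 * μ)) • (LinearMap.id : U1 →ₗ[ℝ] U1) - Ccr)
        = LinearMap.det (((μ + 1) ^ 2) • (LinearMap.id : U1 →ₗ[ℝ] U1) - (4 * μ) • Ccr) := by
    intro μ hμ
    have hsm : ((μ + 1) ^ 2) • (LinearMap.id : U1 →ₗ[ℝ] U1) - (4 * μ) • Ccr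
        = (4 * μ) • (((μ + 1) ^ 2 / (4 * μ)) • (LinearMap.id : U1 →ₗ[ℝ] U1) - Ccr) := by
      match_scalars <;> field_simp
    rw [hsm, LinearMap.det_smul, hd1]
  -- the key identity, valid for every μ by polynomial continuation
  have key : ∀ μ : ℝ,
      LinearMap.det (μ • (LinearMap.id : V →ₗ[ℝ] V) - T)
        = LinearMap.det (((μ + 1) ^ 2) • (LinearMap.id : U1 →ₗ[ℝ] U1) - (4 * μ) • Ccr) := by
    let b := finBasis ℝ V
    let c := finBasis ℝ U1
    set M := LinearMap.toMatrix b b T with hM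
    set N := LinearMap.toMatrix c c Ccr with hN
    have hmatV : ∀ μ : ℝ, LinearMap.det (μ • (LinearMap.id : V →ₗ[ℝ] V) - T)
        = (μ • (1 : Matrix _ _ ℝ) - M).det := by
      intro μ
      rw [← LinearMap.det_toMatrix b, map_sub, _root_.map_smul, LinearMap.toMatrix_id]
    have hmatU : ∀ μ : ℝ,
        LinearMap.det (((μ + 1) ^ 2) • (LinearMap.id : U1 →ₗ[ℝ] U1) - (4 * μ) • Ccr)
        = (((μ + 1) ^ 2) • (1 : Matrix _ _ ℝ) - (4 * μ) • N).det := by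
      intro μ
      rw [← LinearMap.det_toMatrix c, map_sub, _root_.map_smul, _root_.map_smul,
        LinearMap.toMatrix_id]
    set p := ((Polynomial.X : ℝ[X]) • (1 : Matrix _ _ ℝ[X]) - M.map Polynomial.C).det with hp
    set q := ((((Polynomial.X : ℝ[X]) + 1) ^ 2) • (1 : Matrix _ _ ℝ[X])
        - ((4 : ℝ[X]) * Polynomial.X) • N.map Polynomial.C).det with hq
    have hpq : p = q := by
      apply Polynomial.eq_of_infinite_eval_eq
      have hsub : ({0, 1, -1} : Set ℝ)ᶜ ⊆ {x | p.eval x = q.eval x} := by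
        intro x hx
        simp only [Set.mem_compl_iff, Set.mem_insert_iff, Set.mem_singleton_iff, not_or] at hx
        obtain ⟨hx0, hx1, hx2⟩ := hx
        show p.eval x = q.eval x
        rw [hp, hq, eval_det_smul_one_sub_aux, eval_det_q_aux, ← hmatV, ← hmatU,
          key_generic_aux n hV U1 U2 U3 U4 hd1 hd3 h12 h34 x hx0
            (sub_ne_zero.2 hx1) (fun h => hx2 (by linarith)),
          rhs_smul x hx0]
      exact Set.Infinite.mono hsub ((Set.finite_singleton (-1:ℝ)).insert 1
        |>.insert 0 |>.infinite_compl)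
    intro μ
    rw [hmatV, hmatU, ← eval_det_smul_one_sub_aux M μ, ← eval_det_q_aux N μ, ← hp, ← hq, hpq]
  rw [key lam, ← rhs_smul lam hlam]
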